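/- arXiv:1002.4150 — 2 statements merged into one kernel-verified Lean document; each statement's English description precedes it below -/
import Mathlib

section
/- Under the conditions 2εk₁² - k₁k₂ - 1 = 0 and 3k₁k₃ - 1 = 0, the curve y = g(x) = ak₁ + bk₁x + εk₁x² + x³/3 is invariant for the system ẋ = y, ẏ = ax + k₁by + bx² + k₂xy + x²y + εx³ + k₃x⁴; that is, g'(x)·g(x) = ax + k₁b·g(x) + bx² + k₂x·g(x) + x²·g(x) + εx³ + k₃x⁴ for all x. -/
/-- Under the conditions `2εk₁² - k₁k₂ - 1 = 0` and `3k₁k₃ = 1`, the curve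
`y = g(x) = ak₁ + bk₁x + εk₁x² + x³/3` is invariant for the minimal model:
`g'(x)·g(x) = f₂(x, g(x))` for all `x`. -/
theorem invariant_manifold (a b k₁ k₂ k₃ ε : ℝ) (hε : ε = 1 ∨ ε = -1)
    (hk₁ : k₁ ≠ 0)
    (hc₁ : 2 * ε * k₁ ^ 2 - k₁ * k₂ - 1 = 0) (hc₂ : 3 * k₁ * k₃ = 1)
    (g : ℝ → ℝ)
    (hg : ∀ x, g x = a * k₁ + b * k₁ * x + ε * k₁ * x ^ 2 + (1 / 3) * x ^ 3) :
    ∀ x : ℝ, deriv g x * g x =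
      a * x + k₁ * b * g x + b * x ^ 2 + k₂ * x * g x + x ^ 2 * g x
        + ε * x ^ 3 + k₃ * x ^ 4 := by
  have hgfun : g = fun x => a * k₁ + b * k₁ * x + ε * k₁ * x ^ 2 + (1 / 3) * x ^ 3 :=
    funext hg
  subst hgfun
  intro x
  have hd : HasDerivAt (fun x : ℝ => a * k₁ + b * k₁ * x + ε * k₁ * x ^ 2 + (1 / 3) * x ^ 3)
      (b * k₁ + ε * k₁ * (2 * x ^ 1) + (1 / 3) * (3 * x ^ 2)) x := by
    have h1 := (hasDerivAt_id x).const_mul (b * k₁)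
    have h2 := (hasDerivAt_pow 2 x).const_mul (ε * k₁)
    have h3 := (hasDerivAt_pow 3 x).const_mul ((1 : ℝ) / 3)
    simpa [Pi.add_def] using ((hasDerivAt_const x (a * k₁)).add h1 |>.add h2 |>.add h3)
  rw [hd.deriv]
  have hε2 : ε ^ 2 = 1 := by rcases hε with h | h <;> simp [h]
  have hk₂ : k₂ = (2 * ε * k₁ ^ 2 - 1) / k₁ := by field_simp; linarith
  have hk₃ : k₃ = 1 / (3 * k₁) := by field_simp; linarith
  subst hk₂ hk₃
  field_simp
  nlinarith [hε2, sq_nonneg x, sq_nonneg k₁]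
end

section
/- For the minimal model ẋ = y, ẏ = ax + k₁by + bx² + k₂xy + x²y + εx³ + k₃x⁴ with k₃ ≠ 0 and 1 - 3k₃b ≥ 0, the equilibria on the x-axis other than the origin that coalesce at the codimension-two point are the roots of the quadratic obtained from factoring, and they coincide precisely when a = a_SN(b) := (ε/(27k₃²))(2√((1-3k₃b)³) - 2 + 9k₃b). -/
/-- For `h(x) = a + bx + εx² + k₃x³` with `k₃ > 0`, `ε = ±1`, `1 - 3k₃b ≥ 0`
and `3k₁k₃ = 1`, the point `x_SN = εk₁(√(1-3k₃b) - 1)` is a double root of `h`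
(i.e. `h(x_SN) = h'(x_SN) = 0`) if and only if
`a = (ε/(27k₃²))(2√((1-3k₃b)³) - 2 + 9k₃b)`. -/
theorem saddle_node_curve (a b k₁ k₃ ε : ℝ) (hε : ε = 1 ∨ ε = -1)
    (hk₃ : k₃ > 0) (hb : 1 - 3 * k₃ * b ≥ 0) (hk₁ : 3 * k₁ * k₃ = 1)
    (h : ℝ → ℝ) (hh : ∀ x, h x = a + b * x + ε * x ^ 2 + k₃ * x ^ 3)
    (xSN : ℝ) (hx : xSN = ε * k₁ * (Real.sqrt (1 - 3 * k₃ * b) - 1)) :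
    (h xSN = 0 ∧ deriv h xSN = 0) ↔
      a = ε / (27 * k₃ ^ 2) *
        (2 * Real.sqrt ((1 - 3 * k₃ * b) ^ 3) - 2 + 9 * k₃ * b) := by
  have hk₃' : k₃ ≠ 0 := ne_of_gt hk₃
  have hε2 : ε ^ 2 = 1 := by rcases hε with h1 | h1 <;> rw [h1] <;> norm_num
  set s : ℝ := Real.sqrt (1 - 3 * k₃ * b) with hsdef
  have hs0 : 0 ≤ s := Real.sqrt_nonneg _
  have hs2 : s ^ 2 = 1 - 3 * k₃ * b := Real.sq_sqrt hb
  have hs3 : Real.sqrt ((1 - 3 * k₃ * b) ^ 3) = s ^ 3 := by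
    rw [show (1 - 3 * k₃ * b) ^ 3 = (s ^ 3) ^ 2 by rw [← hs2]; ring,
      Real.sqrt_sq (by positivity)]
  have hh' : h = fun x => a + b * x + ε * x ^ 2 + k₃ * x ^ 3 := funext hh
  -- derivative is automatically zero at xSN
  have hd : deriv h xSN = b + ε * (2 * xSN) + k₃ * (3 * xSN ^ 2) := by
    rw [hh']
    have : HasDerivAt (fun x : ℝ => a + b * x + ε * x ^ 2 + k₃ * x ^ 3)
        (0 + b * 1 + ε * (2 * xSN ^ 1) + k₃ * (3 * xSN ^ 2)) xSN := by
      exact (((hasDerivAt_const xSN a).add ((hasDerivAt_id xSN).const_mul b)).add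
        ((hasDerivAt_pow 2 xSN).const_mul ε)).add ((hasDerivAt_pow 3 xSN).const_mul k₃)
    simpa using this.deriv
  have hd0 : deriv h xSN = 0 := by
    rw [hd, hx]
    linear_combination (2 * k₁ * (s - 1) + 3 * k₃ * k₁ ^ 2 * (s - 1) ^ 2) * hε2 +
      (k₁ * (s - 1) ^ 2 - b) * hk₁ + k₁ * hs2
  have key : 27 * k₃ ^ 2 * h xSN =
      27 * k₃ ^ 2 * a - ε * (2 * s ^ 3 - 2 + 9 * k₃ * b) := by
    rw [hh, hx]
    linear_combination 27 * k₃ ^ 2 * ε * (k₁ ^ 2 * (s - 1) ^ 2 + k₃ * k₁ ^ 3 * (s - 1) ^ 3) * hε2 +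
      ε * (9 * k₃ * b * (s - 1) + 3 * (s - 1) ^ 2 * (3 * k₃ * k₁ + 1) +
        (s - 1) ^ 3 * (9 * k₃ ^ 2 * k₁ ^ 2 + 3 * k₃ * k₁ + 1)) * hk₁ +
      (3 * ε * s) * hs2
  rw [hs3]
  constructor
  · rintro ⟨H, -⟩
    rw [H, mul_zero] at key
    field_simp
    linarith
  · intro H
    refine ⟨?_, hd0⟩
    have h27 : (27 : ℝ) * k₃ ^ 2 ≠ 0 := by positivity
    have : 27 * k₃ ^ 2 * h xSN = 0 := by
      rw [key, H]; field_simp; ring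
    rcases mul_eq_zero.mp this with h' | h'
    · exact absurd h' h27
    · exact h'
end
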